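/- Let G be the graph on ℤ^n with edges between points at ℓ^∞-distance 1, and let m ≥ 1. There is no function f : ℤ^n → {1,…,n} and constant K such that every 1-connected component of each fiber f^{-1}({i}) has at most K elements. (I.e., χ_{⋆,m}(G) > n.) -/

import Mathlib

open Finset

/-- General parity lemma: count of "doors" mod 2 equals fullness indicator. -/
lemma parity_lemma {ι β : Type*} [DecidableEq ι] [DecidableEq β]
    (s : Finset ι) (T : Finset β) (g : ι → β) (w : β) (hw : w ∈ T)
    (hcard : s.card = T.card) (hg : ∀ k ∈ s, g k ∈ T) :
    ((s.filter (fun k => (s.erase k).image g = T.erase w)).card : ZMod 2)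
      = if s.image g = T then 1 else 0 := by
  by_cases h : s.image g = T
  · -- fully labeled: exactly one door
    have hinj : Set.InjOn g s := Finset.injOn_of_card_image_eq (by rw [h, hcard])
    have hwim : w ∈ s.image g := h ▸ hw
    obtain ⟨k₀, hk₀s, hk₀⟩ := Finset.mem_image.mp hwim
    have : s.filter (fun k => (s.erase k).image g = T.erase w) = {k₀} := by
      ext k
      simp only [Finset.mem_filter, Finset.mem_singleton]
      constructor
      · rintro ⟨hks, hkim⟩
        by_cases hgk : g k = w
        · exact hinj hks hk₀s (hgk.trans hk₀.symm)
        · exfalso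
          have hk₀e : k₀ ∈ s.erase k := by
            refine Finset.mem_erase.mpr ⟨?_, hk₀s⟩
            rintro rfl; exact hgk hk₀
          have : w ∈ T.erase w := by
            rw [← hkim]; exact hk₀ ▸ Finset.mem_image_of_mem g hk₀e
          exact (Finset.notMem_erase w T) this
      · rintro rfl
        refine ⟨hk₀s, ?_⟩
        apply Finset.eq_of_subset_of_card_le
        · intro y hy
          obtain ⟨j, hj, rfl⟩ := Finset.mem_image.mp hy
          have hjs := Finset.mem_of_mem_erase hj
          refine Finset.mem_erase.mpr ⟨?_, hg j hjs⟩
          intro hgj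
          exact (Finset.mem_erase.mp hj).1 (hinj hjs hk₀s (hgj.trans hk₀.symm))
        · have h1 : (T.erase w).card = T.card - 1 := Finset.card_erase_of_mem hw
          have h2 : ((s.erase k).image g).card = (s.erase k).card :=
            Finset.card_image_of_injOn (hinj.mono (by simp [Finset.erase_subset]))
          rw [h1, h2, Finset.card_erase_of_mem hk₀s, hcard]
    rw [this, if_pos h]; simp
  · rw [if_neg h]
    set D := s.filter (fun k => (s.erase k).image g = T.erase w) with hD
    rcases D.eq_empty_or_nonempty with he | hne
    · rw [he]; simp
    · obtain ⟨k₀, hk₀⟩ := hne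
      have hk₀s : k₀ ∈ s := (Finset.mem_filter.mp hk₀).1
      have hk₀d : (s.erase k₀).image g = T.erase w := (Finset.mem_filter.mp hk₀).2
      have hinj0 : Set.InjOn g (s.erase k₀) := by
        apply Finset.injOn_of_card_image_eq
        rw [hk₀d, Finset.card_erase_of_mem hw, Finset.card_erase_of_mem hk₀s, hcard]
      have hgk₀ : g k₀ ≠ w := by
        intro hgw
        apply h
        have : s = insert k₀ (s.erase k₀) := (Finset.insert_erase hk₀s).symm
        rw [this, Finset.image_insert, hk₀d, hgw, Finset.insert_erase hw]
      have hgk₀T : g k₀ ∈ T.erase w := Finset.mem_erase.mpr ⟨hgk₀, hg k₀ hk₀s⟩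
      rw [← hk₀d] at hgk₀T
      obtain ⟨b, hb, hgb⟩ := Finset.mem_image.mp hgk₀T
      have hbk₀ : b ≠ k₀ := (Finset.mem_erase.mp hb).1
      have hbs : b ∈ s := Finset.mem_of_mem_erase hb
      have hDeq : D = {k₀, b} := by
        ext k
        simp only [hD, Finset.mem_filter, Finset.mem_insert, Finset.mem_singleton]
        constructor
        · rintro ⟨hks, hkd⟩
          by_contra hkk
          push_neg at hkk
          have hinjk : Set.InjOn g (s.erase k) := by
            apply Finset.injOn_of_card_image_eq
            rw [hkd, Finset.card_erase_of_mem hw, Finset.card_erase_of_mem hks, hcard]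
          have h1 : k₀ ∈ s.erase k := Finset.mem_erase.mpr ⟨fun hh => (hkk.1 hh.symm).elim, hk₀s⟩
          have h2 : b ∈ s.erase k := Finset.mem_erase.mpr ⟨fun hh => (hkk.2 hh.symm).elim, hbs⟩
          exact hbk₀ (hinjk h2 h1 hgb)
        · intro hk
          have hkey : ∀ u v : ι, u ∈ s → v ∈ s → u ≠ v → g u = g v →
              (s.erase u).image g = T.erase w → (s.erase v).image g = T.erase w := by
            intro u v hus hvs huv hguv hu
            rw [← hu]
            apply Finset.Subset.antisymm
            · intro y hy
              obtain ⟨j, hj, rfl⟩ := Finset.mem_image.mp hy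
              rcases eq_or_ne j u with rfl | hju
              · rw [hguv]
                exact Finset.mem_image_of_mem g (Finset.mem_erase.mpr ⟨Ne.symm huv, hvs⟩)
              · exact Finset.mem_image_of_mem g
                  (Finset.mem_erase.mpr ⟨hju, Finset.mem_of_mem_erase hj⟩)
            · intro y hy
              obtain ⟨j, hj, rfl⟩ := Finset.mem_image.mp hy
              rcases eq_or_ne j v with rfl | hjv
              · rw [← hguv]
                exact Finset.mem_image_of_mem g (Finset.mem_erase.mpr ⟨huv, hus⟩)
              · exact Finset.mem_image_of_mem g
                  (Finset.mem_erase.mpr ⟨hjv, Finset.mem_of_mem_erase hj⟩)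
          rcases hk with rfl | rfl
          · exact ⟨hk₀s, hk₀d⟩
          · exact ⟨hbs, hkey k₀ k hk₀s hbs (Ne.symm hbk₀) hgb.symm hk₀d⟩
      rw [hDeq]
      rw [Finset.card_insert_of_notMem (by simpa using Ne.symm hbk₀), Finset.card_singleton]
      decide

open Finset

/-- A subset of `ℤⁿ` is 1-connected: any two points are joined by a finite sequence in the
set whose consecutive terms are at `ℓ∞`-distance at most `1`. -/
def OneConnected {n : ℕ} (P : Set (Fin n → ℤ)) : Prop :=
  ∀ p ∈ P, ∀ q ∈ P, ∃ (N : ℕ) (c : Fin (N + 1) → (Fin n → ℤ)),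
    (∀ t, c t ∈ P) ∧ c 0 = p ∧ c (Fin.last N) = q ∧
    ∀ (t : Fin N) (j : Fin n), |c t.castSucc j - c t.succ j| ≤ 1

/-- `C` is a 1-connected component of `S ⊆ ℤⁿ`: a maximal 1-connected subset of `S`. -/
def IsOneComponent {n : ℕ} (S C : Set (Fin n → ℤ)) : Prop :=
  C ⊆ S ∧ OneConnected C ∧ ∀ C', C ⊆ C' → C' ⊆ S → OneConnected C' → C' = C


namespace NB
variable {n : ℕ}

def InCube (L : ℕ) (p : Fin n → ℤ) : Prop := ∀ j, 0 ≤ p j ∧ p j ≤ (L:ℤ)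

/-- `k`-th vertex of the Freudenthal simplex with base `x` and order `σ`. -/
def V (x : Fin n → ℤ) (σ : Equiv.Perm (Fin n)) (k : Fin (n+1)) : Fin n → ℤ :=
  fun j => x j + if ((σ.symm j : ℕ) < (k:ℕ)) then 1 else 0

/-- `d`-dimensional simplices in the cube `[0,L]^n`, active coordinates `< d`. -/
noncomputable def Simp (L : ℕ) (D : Fin (n+1)) : Finset ((Fin n → ℤ) × Equiv.Perm (Fin n)) :=
  ((Finset.Icc (fun _ => 0) (fun _ => (L:ℤ)-1)) ×ˢ Finset.univ).filter
    (fun t => (∀ j : Fin n, (D:ℕ) ≤ (j:ℕ) → t.1 j = 0) ∧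
      ∀ j : Fin n, (D:ℕ) ≤ (j:ℕ) → t.2 j = j)

lemma mem_Simp {L : ℕ} {D : Fin (n+1)} {x : Fin n → ℤ} {σ : Equiv.Perm (Fin n)} :
    (x, σ) ∈ Simp L D ↔ (∀ j, 0 ≤ x j ∧ x j ≤ (L:ℤ) - 1) ∧
      (∀ j : Fin n, (D:ℕ) ≤ (j:ℕ) → x j = 0) ∧
      (∀ j : Fin n, (D:ℕ) ≤ (j:ℕ) → σ j = j) := by
  simp only [Simp, Finset.mem_filter, Finset.mem_product, Finset.mem_Icc, Finset.mem_univ,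
    and_true, true_and, Pi.le_def]
  constructor
  · rintro ⟨⟨h1, h2⟩, h3, h4⟩; exact ⟨fun j => ⟨h1 j, h2 j⟩, h3, h4⟩
  · rintro ⟨h1, h3, h4⟩; exact ⟨⟨fun j => (h1 j).1, fun j => (h1 j).2⟩, h3, h4⟩

lemma V_mem_cube {L : ℕ} {D : Fin (n+1)} {x : Fin n → ℤ} {σ : Equiv.Perm (Fin n)}
    (h : (x, σ) ∈ Simp L D) (k : Fin (n+1)) : InCube L (V x σ k) := by
  intro j
  obtain ⟨h1, -, -⟩ := mem_Simp.mp h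
  unfold V
  constructor
  · have := (h1 j).1; split <;> omega
  · have := (h1 j).2; split <;> omega

lemma symm_fix {σ : Equiv.Perm (Fin n)} {D : Fin (n+1)}
    (hσ : ∀ j : Fin n, (D:ℕ) ≤ (j:ℕ) → σ j = j) (j : Fin n) (hj : (D:ℕ) ≤ (j:ℕ)) :
    σ.symm j = j := by
  have := hσ j hj
  exact σ.injective (by rw [σ.apply_symm_apply, this])

lemma V_frozen {L : ℕ} {D : Fin (n+1)} {x : Fin n → ℤ} {σ : Equiv.Perm (Fin n)}
    (h : (x, σ) ∈ Simp L D) {k : Fin (n+1)} (hk : (k:ℕ) ≤ (D:ℕ))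
    (j : Fin n) (hj : (D:ℕ) ≤ (j:ℕ)) : V x σ k j = 0 := by
  obtain ⟨-, h2, h3⟩ := mem_Simp.mp h
  unfold V
  rw [symm_fix h3 j hj, h2 j hj, if_neg (by omega)]
  omega

lemma Iic_succ_erase (i : Fin n) : (Iic i.succ).erase i.succ = Iic i.castSucc := by
  ext k
  simp only [Finset.mem_erase, Finset.mem_Iic, Fin.le_def, Fin.val_succ, Fin.coe_castSucc,
    ← Fin.val_ne_iff]
  omega

lemma Iic_last_eq_univ : Iic (Fin.last n) = (univ : Finset (Fin (n+1))) := by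
  ext k; simp [Fin.le_last]

variable (lab : (Fin n → ℤ) → Fin (n+1))

def gmap (x : Fin n → ℤ) (σ : Equiv.Perm (Fin n)) : Fin (n+1) → Fin (n+1) :=
  fun k => lab (V x σ k)

def Full (D : Fin (n+1)) (t : (Fin n → ℤ) × Equiv.Perm (Fin n)) : Prop :=
  (Iic D).image (gmap lab t.1 t.2) = Iic D

instance (D : Fin (n+1)) : DecidablePred (Full lab D) := fun t => by
  unfold Full; infer_instance

/-- Labels of vertices of a `D`-simplex lie in `Iic D`, under condition (A). -/
lemma lab_mem_Iic {L : ℕ}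
    (hA : ∀ p, InCube L p → ∀ i : Fin n, p i = 0 → lab p ≠ i.succ)
    {D : Fin (n+1)} {x : Fin n → ℤ} {σ : Equiv.Perm (Fin n)}
    (h : (x, σ) ∈ Simp L D) {k : Fin (n+1)} (hk : k ∈ Iic D) :
    gmap lab x σ k ∈ Iic D := by
  rw [Finset.mem_Iic] at hk ⊢
  by_contra hc
  rw [Fin.le_def, not_le] at hc
  set v := V x σ k with hv
  have hval : (D:ℕ) < (lab v : ℕ) := hc
  have hpos : 0 < (lab v : ℕ) := by
    have : (D:ℕ) ≥ 0 := Nat.zero_le _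
    omega
  have hlt : (lab v : ℕ) - 1 < n := by
    have := (lab v).isLt; omega
  set jf : Fin n := ⟨(lab v : ℕ) - 1, hlt⟩ with hjf
  have hsucc : lab v = jf.succ := by
    apply Fin.ext; simp [hjf, Fin.val_succ]; omega
  have hjD : (D:ℕ) ≤ (jf:ℕ) := by simp [hjf]; omega
  have h0 : v jf = 0 := V_frozen h (Fin.le_def.mp hk) jf hjD
  exact hA v (V_mem_cube h k) jf h0 hsucc


-- ## the cycle permutation (0 1 ... i)

def cycTo (i : Fin n) (j : Fin n) : Fin n :=
  if h : (j:ℕ) < (i:ℕ) then ⟨(j:ℕ)+1, by have := i.isLt; omega⟩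
  else if j = i then ⟨0, i.pos⟩ else j

def cycInv (i : Fin n) (j : Fin n) : Fin n :=
  if (j:ℕ) = 0 then i else if h : (j:ℕ) ≤ (i:ℕ) then ⟨(j:ℕ)-1, by have := j.isLt; omega⟩ else j

lemma cycTo_val (i j : Fin n) : (cycTo i j : ℕ) =
    if (j:ℕ) < (i:ℕ) then (j:ℕ)+1 else if (j:ℕ) = (i:ℕ) then 0 else (j:ℕ) := by
  unfold cycTo
  by_cases h1 : (j:ℕ) < (i:ℕ)
  · rw [dif_pos h1, if_pos h1]
  · rw [dif_neg h1, if_neg h1]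
    by_cases h2 : j = i
    · rw [if_pos h2, if_pos (congrArg Fin.val h2)]
    · rw [if_neg h2, if_neg (fun hc => h2 (Fin.ext hc))]

lemma cycInv_val (i j : Fin n) : (cycInv i j : ℕ) =
    if (j:ℕ) = 0 then (i:ℕ) else if (j:ℕ) ≤ (i:ℕ) then (j:ℕ)-1 else (j:ℕ) := by
  unfold cycInv
  by_cases h1 : (j:ℕ) = 0
  · rw [if_pos h1, if_pos h1]
  · rw [if_neg h1, if_neg h1]
    by_cases h2 : (j:ℕ) ≤ (i:ℕ)
    · rw [dif_pos h2, if_pos h2]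
    · rw [dif_neg h2, if_neg h2]

def cyc (i : Fin n) : Equiv.Perm (Fin n) where
  toFun := cycTo i
  invFun := cycInv i
  left_inv j := by
    apply Fin.ext
    rw [cycInv_val, cycTo_val]
    have h1 := i.isLt
    have h2 := j.isLt
    split_ifs <;> (try omega) <;> exact (by assumption : False).elim
  right_inv j := by
    apply Fin.ext
    rw [cycTo_val, cycInv_val]
    have h1 := i.isLt
    have h2 := j.isLt
    split_ifs <;> (try omega) <;> exact (by assumption : False).elim

lemma cyc_val (i j : Fin n) : (cyc i j : ℕ) =
    if (j:ℕ) < (i:ℕ) then (j:ℕ)+1 else if (j:ℕ) = (i:ℕ) then 0 else (j:ℕ) := by exact cycTo_val i j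

lemma cyc_symm_val (i j : Fin n) : ((cyc i).symm j : ℕ) =
    if (j:ℕ) = 0 then (i:ℕ) else if (j:ℕ) ≤ (i:ℕ) then (j:ℕ)-1 else (j:ℕ) := by exact cycInv_val i j

-- ## bump

def bump (x : Fin n → ℤ) (j0 : Fin n) : Fin n → ℤ := fun j => x j + if j = j0 then 1 else 0

-- ## facet correspondence for the `k = 0` pivot

lemma F1 {i : Fin n} {x : Fin n → ℤ} {σ : Equiv.Perm (Fin n)} {m m' : Fin (n+1)}
    (hm : (m:ℕ) ≤ (i:ℕ)) (hm' : (m':ℕ) = (m:ℕ)+1) :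
    V (bump x (σ ⟨0, i.pos⟩)) (σ * cyc i) m = V x σ m' := by
  funext j
  have hsymm : (σ * cyc i).symm j = (cyc i).symm (σ.symm j) := rfl
  have hin := i.isLt
  have hbz : (j = σ ⟨0, i.pos⟩) ↔ ((σ.symm j : ℕ) = 0) := by
    rw [← Equiv.symm_apply_eq]
    constructor
    · intro h; rw [h]
    · intro h; exact Fin.ext h
  unfold V bump
  rw [hsymm]
  simp only [hbz]
  rw [cyc_symm_val]
  have hu := (σ.symm j).isLt
  split_ifs <;> omega

-- ## facet correspondence for middle pivots

lemma F2 {x : Fin n → ℤ} {σ : Equiv.Perm (Fin n)} {a b : Fin n} {m : Fin (n+1)}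
    (hab : (a:ℕ)+1 = (b:ℕ)) (hm : (m:ℕ) ≠ (b:ℕ)) :
    V x (σ * Equiv.swap a b) m = V x σ m := by
  funext j
  have hsymm : (σ * Equiv.swap a b).symm j = (Equiv.swap a b).symm (σ.symm j) := rfl
  unfold V
  rw [hsymm, Equiv.symm_swap]
  set u := σ.symm j with hu
  by_cases h1 : u = a
  · rw [h1, Equiv.swap_apply_left]
    have : (a:ℕ) ≠ (m:ℕ) → True := fun _ => trivial
    split_ifs <;> omega
  · by_cases h2 : u = b
    · rw [h2, Equiv.swap_apply_right]
      split_ifs <;> omega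
    · rw [Equiv.swap_apply_of_ne_of_ne h1 h2]

def succF : Fin (n+1) → Fin (n+1) := fun m => ⟨min ((m:ℕ)+1) n, by omega⟩

lemma image_succF (i : Fin n) :
    (Iic (Fin.castSucc i)).image succF = (Iic i.succ).erase 0 := by
  ext k
  simp only [Finset.mem_image, Finset.mem_erase, Finset.mem_Iic, Fin.le_def,
    Fin.coe_castSucc, Fin.val_succ, ← Fin.val_ne_iff]
  constructor
  · rintro ⟨m, hm, rfl⟩
    have hin : (i:ℕ) < n := i.isLt
    simp only [succF, Fin.val_zero]
    omega
  · rintro ⟨hk0, hkle⟩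
    have hin : (i:ℕ) < n := i.isLt
    refine ⟨⟨(k:ℕ)-1, by omega⟩, by simp; omega, ?_⟩
    apply Fin.ext
    simp only [succF, Fin.val_zero] at hk0 ⊢
    omega


-- ## small permutation facts

lemma sigma_low {L : ℕ} {i : Fin n} {x : Fin n → ℤ} {σ : Equiv.Perm (Fin n)}
    (h : (x, σ) ∈ Simp L i.succ) {u : Fin n} (hu : (u:ℕ) ≤ (i:ℕ)) : ((σ u : Fin n) : ℕ) ≤ (i:ℕ) := by
  obtain ⟨-, -, h3⟩ := mem_Simp.mp h
  by_contra hc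
  push_neg at hc
  have hfix : σ (σ u) = σ u := h3 (σ u) (by simp [Fin.val_succ]; omega)
  have := σ.injective hfix
  omega

lemma cyc_apply_self (i : Fin n) : cyc i i = ⟨0, i.pos⟩ := by
  apply Fin.ext; rw [cyc_val]; simp

lemma cyc_fix {i j : Fin n} (h : (i:ℕ) < (j:ℕ)) : cyc i j = j := by
  apply Fin.ext; rw [cyc_val]; rw [if_neg (by omega), if_neg (by omega)]

lemma cyc_symm_zero' (i : Fin n) : (cyc i).symm ⟨0, i.pos⟩ = i := by
  apply Fin.ext; rw [cyc_symm_val]; simp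

lemma cyc_inv_apply_zero (i : Fin n) : (cyc i)⁻¹ ⟨0, i.pos⟩ = i := cyc_symm_zero' i

lemma cyc_inv_fix {i j : Fin n} (h : (i:ℕ) < (j:ℕ)) : (cyc i)⁻¹ j = j := by
  have : cyc i j = j := cyc_fix h
  calc (cyc i)⁻¹ j = (cyc i)⁻¹ (cyc i j) := by rw [this]
  _ = j := (cyc i).symm_apply_apply j

def bdrop (x : Fin n → ℤ) (j0 : Fin n) : Fin n → ℤ := fun j => x j - if j = j0 then 1 else 0

lemma bdrop_bump (x : Fin n → ℤ) (j0 : Fin n) : bdrop (bump x j0) j0 = x := by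
  funext j; simp [bdrop, bump]

lemma bump_bdrop (x : Fin n → ℤ) (j0 : Fin n) : bump (bdrop x j0) j0 = x := by
  funext j; simp [bdrop, bump]

-- ## the doors of the induction step

variable (L : ℕ) (i : Fin n)

def Dr (k : Fin (n+1)) (t : (Fin n → ℤ) × Equiv.Perm (Fin n)) : Prop :=
  ((Iic i.succ).erase k).image (gmap lab t.1 t.2) = Iic i.castSucc

instance (k : Fin (n+1)) (a : (Fin n → ℤ) × Equiv.Perm (Fin n)) : Decidable (Dr lab i k a) :=
  inferInstanceAs (Decidable (_ = _))

noncomputable def Dset : Finset ((_ : (Fin n → ℤ) × Equiv.Perm (Fin n)) × Fin (n+1)) :=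
  (Simp L i.succ).sigma (fun a => (Iic i.succ).filter (fun k => Dr lab i k a))

def BU (t : (_ : (Fin n → ℤ) × Equiv.Perm (Fin n)) × Fin (n+1)) : Prop :=
  t.2 = 0 ∧ t.1.1 (t.1.2 ⟨0, i.pos⟩) = (L:ℤ) - 1

def BD (t : (_ : (Fin n → ℤ) × Equiv.Perm (Fin n)) × Fin (n+1)) : Prop :=
  t.2 = i.succ ∧ t.1.1 (t.1.2 i) = 0

instance : DecidablePred (BU L i) := fun t => by unfold BU; infer_instance

instance : DecidablePred (BD i) := fun t => by unfold BD; infer_instance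

def psi (t : (_ : (Fin n → ℤ) × Equiv.Perm (Fin n)) × Fin (n+1)) :
    (_ : (Fin n → ℤ) × Equiv.Perm (Fin n)) × Fin (n+1) :=
  if t.2 = 0 then ⟨(bump t.1.1 (t.1.2 ⟨0, i.pos⟩), t.1.2 * cyc i), i.succ⟩
  else if t.2 = i.succ then ⟨(bdrop t.1.1 (t.1.2 i), t.1.2 * (cyc i)⁻¹), 0⟩
  else ⟨(t.1.1, t.1.2 * Equiv.swap ⟨min ((t.2:ℕ)-1) (i:ℕ), by have := i.isLt; omega⟩
      ⟨min (t.2:ℕ) (i:ℕ), by have := i.isLt; omega⟩), t.2⟩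

lemma mem_Dset {t : (_ : (Fin n → ℤ) × Equiv.Perm (Fin n)) × Fin (n+1)} :
    t ∈ Dset lab L i ↔ t.1 ∈ Simp L i.succ ∧ t.2 ∈ Iic i.succ ∧ Dr lab i t.2 t.1 := by
  unfold Dset
  simp [Finset.mem_sigma, Finset.mem_filter, and_assoc]



lemma mul_cyc_apply_i (σ : Equiv.Perm (Fin n)) (i : Fin n) : (σ * cyc i) i = σ ⟨0, i.pos⟩ := by
  simp only [Equiv.Perm.mul_apply, cyc_apply_self]

lemma mul_cycinv_apply_z (σ : Equiv.Perm (Fin n)) (i : Fin n) :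
    (σ * (cyc i)⁻¹) ⟨0, i.pos⟩ = σ i := by
  simp only [Equiv.Perm.mul_apply, cyc_inv_apply_zero]

lemma succF_val {i : Fin n} {m : Fin (n+1)} (hm : (m:ℕ) ≤ (i:ℕ)) : ((succF m : Fin (n+1)) : ℕ) = (m:ℕ)+1 := by
  have := i.isLt
  simp only [succF]
  omega

lemma door_transfer_zero {x : Fin n → ℤ} {σ : Equiv.Perm (Fin n)} :
    Dr lab i i.succ (bump x (σ ⟨0, i.pos⟩), σ * cyc i) ↔ Dr lab i 0 (x, σ) := by
  unfold Dr
  rw [Iic_succ_erase]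
  have himg : (Iic (Fin.castSucc i)).image (gmap lab (bump x (σ ⟨0, i.pos⟩)) (σ * cyc i))
      = ((Iic (Fin.castSucc i)).image succF).image (gmap lab x σ) := by
    rw [Finset.image_image]
    apply Finset.image_congr
    intro m hm
    simp only [Finset.mem_coe, Finset.mem_Iic, Fin.le_def, Fin.coe_castSucc] at hm
    show lab (V (bump x (σ ⟨0,i.pos⟩)) (σ * cyc i) m) = lab (V x σ (succF m))
    rw [F1 hm (succF_val hm)]
  rw [himg, image_succF]

lemma door_transfer_top {x : Fin n → ℤ} {σ : Equiv.Perm (Fin n)} :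
    Dr lab i 0 (bdrop x (σ i), σ * (cyc i)⁻¹) ↔ Dr lab i i.succ (x, σ) := by
  unfold Dr
  rw [Iic_succ_erase]
  have hkey : ∀ m : Fin (n+1), (m:ℕ) ≤ (i:ℕ) →
      V x σ m = V (bdrop x (σ i)) (σ * (cyc i)⁻¹) (succF m) := by
    intro m hm
    have h1 : (σ * (cyc i)⁻¹) * cyc i = σ := inv_mul_cancel_right σ (cyc i)
    have h2 : (σ * (cyc i)⁻¹) ⟨0, i.pos⟩ = σ i := mul_cycinv_apply_z σ i
    have := F1 (i := i) (x := bdrop x (σ i)) (σ := σ * (cyc i)⁻¹) hm (succF_val hm)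
    rw [h1, h2, bump_bdrop] at this
    exact this
  have himg : (Iic (Fin.castSucc i)).image (gmap lab x σ)
      = ((Iic (Fin.castSucc i)).image succF).image (gmap lab (bdrop x (σ i)) (σ * (cyc i)⁻¹)) := by
    rw [Finset.image_image]
    apply Finset.image_congr
    intro m hm
    simp only [Finset.mem_coe, Finset.mem_Iic, Fin.le_def, Fin.coe_castSucc] at hm
    show lab (V x σ m) = lab (V (bdrop x (σ i)) (σ * (cyc i)⁻¹) (succF m))
    rw [hkey m hm]
  rw [himg, image_succF]

lemma door_transfer_mid {x : Fin n → ℤ} {σ : Equiv.Perm (Fin n)} {k : Fin (n+1)}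
    {a b : Fin n} (hab : (a:ℕ)+1 = (b:ℕ)) (hbk : (b:ℕ) = (k:ℕ)) :
    Dr lab i k (x, σ * Equiv.swap a b) ↔ Dr lab i k (x, σ) := by
  unfold Dr
  have : ((Iic i.succ).erase k).image (gmap lab x (σ * Equiv.swap a b))
      = ((Iic i.succ).erase k).image (gmap lab x σ) := by
    apply Finset.image_congr
    intro m hm
    simp only [Finset.mem_coe, Finset.mem_erase] at hm
    show lab (V x (σ * Equiv.swap a b) m) = lab (V x σ m)
    rw [F2 hab (by rw [hbk]; exact fun hc => hm.1 (Fin.ext hc))]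
  rw [this]

lemma simp_mem_zero {x : Fin n → ℤ} {σ : Equiv.Perm (Fin n)}
    (hmem : (x, σ) ∈ Simp L i.succ) (hBU : x (σ ⟨0, i.pos⟩) ≠ (L:ℤ) - 1) :
    (bump x (σ ⟨0, i.pos⟩), σ * cyc i) ∈ Simp L i.succ := by
  obtain ⟨h1, h2, h3⟩ := mem_Simp.mp hmem
  have hz : ((σ ⟨0, i.pos⟩ : Fin n) : ℕ) ≤ (i:ℕ) := sigma_low hmem (Nat.zero_le _)
  refine mem_Simp.mpr ⟨?_, ?_, ?_⟩
  · intro j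
    unfold bump
    by_cases hj : j = σ ⟨0, i.pos⟩
    · subst hj
      have := h1 (σ ⟨0, i.pos⟩)
      rw [if_pos rfl]
      constructor
      · omega
      · have : x (σ ⟨0, i.pos⟩) < (L:ℤ) - 1 := lt_of_le_of_ne this.2 hBU
        omega
    · rw [if_neg hj]
      have := h1 j
      omega
  · intro j hj
    unfold bump
    rw [if_neg (by intro hc; subst hc; simp [Fin.val_succ] at hj; omega), h2 j hj]
    omega
  · intro j hj
    simp only [Fin.val_succ] at hj
    have hcf : cyc i j = j := cyc_fix (by omega)
    show σ (cyc i j) = j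
    rw [hcf]
    exact h3 j (by simp [Fin.val_succ]; omega)

lemma simp_mem_top {x : Fin n → ℤ} {σ : Equiv.Perm (Fin n)}
    (hmem : (x, σ) ∈ Simp L i.succ) (hBD : x (σ i) ≠ 0) :
    (bdrop x (σ i), σ * (cyc i)⁻¹) ∈ Simp L i.succ := by
  obtain ⟨h1, h2, h3⟩ := mem_Simp.mp hmem
  have hz : ((σ i : Fin n) : ℕ) ≤ (i:ℕ) := sigma_low hmem le_rfl
  refine mem_Simp.mpr ⟨?_, ?_, ?_⟩
  · intro j
    unfold bdrop
    by_cases hj : j = σ i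
    · subst hj
      have := h1 (σ i)
      rw [if_pos rfl]
      have : 0 < x (σ i) := lt_of_le_of_ne this.1 (Ne.symm hBD)
      have := (h1 (σ i)).2
      constructor <;> omega
    · rw [if_neg hj]
      have := h1 j
      omega
  · intro j hj
    unfold bdrop
    rw [if_neg (by intro hc; subst hc; simp [Fin.val_succ] at hj; omega), h2 j hj]
    omega
  · intro j hj
    simp only [Fin.val_succ] at hj
    have hcf : (cyc i)⁻¹ j = j := cyc_inv_fix (by omega)
    show σ ((cyc i)⁻¹ j) = j
    rw [hcf]
    exact h3 j (by simp [Fin.val_succ]; omega)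

lemma simp_mem_mid {x : Fin n → ℤ} {σ : Equiv.Perm (Fin n)} {a b : Fin n}
    (hmem : (x, σ) ∈ Simp L i.succ) (ha : (a:ℕ) ≤ (i:ℕ)) (hb : (b:ℕ) ≤ (i:ℕ)) :
    (x, σ * Equiv.swap a b) ∈ Simp L i.succ := by
  obtain ⟨h1, h2, h3⟩ := mem_Simp.mp hmem
  refine mem_Simp.mpr ⟨h1, h2, ?_⟩
  intro j hj
  simp only [Fin.val_succ] at hj
  have hja : j ≠ a := by intro hc; subst hc; omega
  have hjb : j ≠ b := by intro hc; subst hc; omega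
  show σ (Equiv.swap a b j) = j
  rw [Equiv.swap_apply_of_ne_of_ne hja hjb]
  exact h3 j (by simp [Fin.val_succ]; omega)


lemma psi_eval_zero (a : (Fin n → ℤ) × Equiv.Perm (Fin n)) :
    psi i ⟨a, 0⟩ = ⟨(bump a.1 (a.2 ⟨0, i.pos⟩), a.2 * cyc i), i.succ⟩ := by
  simp [psi]

lemma psi_eval_top (a : (Fin n → ℤ) × Equiv.Perm (Fin n)) :
    psi i ⟨a, i.succ⟩ = ⟨(bdrop a.1 (a.2 i), a.2 * (cyc i)⁻¹), 0⟩ := by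
  simp [psi, Fin.succ_ne_zero i]

lemma psi_eval_mid (a : (Fin n → ℤ) × Equiv.Perm (Fin n)) (k : Fin (n+1))
    (h0 : k ≠ 0) (h1 : k ≠ i.succ) :
    psi i ⟨a, k⟩ = ⟨(a.1, a.2 * Equiv.swap ⟨min ((k:ℕ)-1) (i:ℕ), by have := i.isLt; omega⟩
      ⟨min (k:ℕ) (i:ℕ), by have := i.isLt; omega⟩), k⟩ := by
  simp [psi, h0, h1]

lemma psi_good {t : (_ : (Fin n → ℤ) × Equiv.Perm (Fin n)) × Fin (n+1)}
    (ht : t ∈ Dset lab L i) (hbu : ¬ BU L i t) (hbd : ¬ BD i t) :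
    (psi i t ∈ Dset lab L i ∧ ¬ BU L i (psi i t) ∧ ¬ BD i (psi i t)) ∧
      psi i (psi i t) = t ∧ psi i t ≠ t := by
  obtain ⟨⟨x, σ⟩, k⟩ := t
  obtain ⟨hmem, hk, hdr⟩ := (mem_Dset lab L i).mp ht
  simp only at hmem hdr
  obtain ⟨hbox, hfrz, hfrσ⟩ := mem_Simp.mp hmem
  by_cases hk0 : k = 0
  · subst hk0
    unfold BU at hbu
    simp only [true_and] at hbu
    rw [psi_eval_zero]
    have hne : x (σ ⟨0, i.pos⟩) ≠ (L:ℤ) - 1 := hbu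
    refine ⟨⟨?_, ?_, ?_⟩, ?_, ?_⟩
    · exact (mem_Dset lab L i).mpr ⟨simp_mem_zero L i hmem hne, Finset.mem_Iic.mpr le_rfl,
        (door_transfer_zero lab i).mpr hdr⟩
    · unfold BU
      simp only
      intro hc
      exact Fin.succ_ne_zero i hc.1
    · unfold BD
      simp only
      rintro ⟨-, hc⟩
      rw [mul_cyc_apply_i] at hc
      have : bump x (σ ⟨0, i.pos⟩) (σ ⟨0, i.pos⟩) = x (σ ⟨0, i.pos⟩) + 1 := by
        simp [bump]
      rw [this] at hc
      have := (hbox (σ ⟨0, i.pos⟩)).1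
      omega
    · rw [psi_eval_top]
      simp only
      rw [mul_cyc_apply_i, bdrop_bump, mul_inv_cancel_right]
    · intro hc
      exact Fin.succ_ne_zero i (congrArg Sigma.snd hc)
  · by_cases hk1 : k = i.succ
    · subst hk1
      unfold BD at hbd
      simp only [true_and] at hbd
      rw [psi_eval_top]
      have hne : x (σ i) ≠ 0 := hbd
      refine ⟨⟨?_, ?_, ?_⟩, ?_, ?_⟩
      · exact (mem_Dset lab L i).mpr ⟨simp_mem_top L i hmem hne, Finset.mem_Iic.mpr (Fin.zero_le _),
          (door_transfer_top lab i).mpr hdr⟩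
      · unfold BU
        simp only
        rintro ⟨-, hc⟩
        rw [mul_cycinv_apply_z] at hc
        have : bdrop x (σ i) (σ i) = x (σ i) - 1 := by simp [bdrop]
        rw [this] at hc
        have := (hbox (σ i)).2
        omega
      · unfold BD
        simp only
        rintro ⟨hc, -⟩
        exact Fin.succ_ne_zero i hc.symm
      · rw [psi_eval_zero]
        simp only
        rw [mul_cycinv_apply_z, bump_bdrop, inv_mul_cancel_right]
      · intro hc
        exact Fin.succ_ne_zero i (congrArg Sigma.snd hc).symm
    · have hkv0 : (k:ℕ) ≠ 0 := fun hc => hk0 (Fin.ext hc)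
      have hkv1 : (k:ℕ) ≠ (i:ℕ)+1 := fun hc => hk1 (Fin.ext (by rw [hc, Fin.val_succ]))
      have hkle : (k:ℕ) ≤ (i:ℕ)+1 := by
        have := Finset.mem_Iic.mp hk
        rw [Fin.le_def, Fin.val_succ] at this
        exact this
      have hki : (k:ℕ) ≤ (i:ℕ) := by omega
      rw [psi_eval_mid i _ k hk0 hk1]
      set a : Fin n := ⟨min ((k:ℕ)-1) (i:ℕ), by have := i.isLt; omega⟩ with ha
      set b : Fin n := ⟨min (k:ℕ) (i:ℕ), by have := i.isLt; omega⟩ with hb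
      have hav : (a:ℕ) = (k:ℕ)-1 := by simp [ha]; omega
      have hbv : (b:ℕ) = (k:ℕ) := by simp [hb]; omega
      have hab : (a:ℕ)+1 = (b:ℕ) := by omega
      refine ⟨⟨?_, ?_, ?_⟩, ?_, ?_⟩
      · exact (mem_Dset lab L i).mpr ⟨simp_mem_mid L i hmem (by omega) (by omega), hk,
          (door_transfer_mid lab i hab hbv).mpr hdr⟩
      · unfold BU
        simp only
        rintro ⟨hc, -⟩
        exact hk0 hc
      · unfold BD
        simp only
        rintro ⟨hc, -⟩
        exact hk1 hc
      · rw [psi_eval_mid i _ k hk0 hk1]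
        simp only
        rw [← ha, ← hb, mul_assoc, Equiv.swap_mul_self, mul_one]
      · intro hc
        have hfst := congrArg Sigma.fst hc
        simp only at hfst
        have hσ : σ * Equiv.swap a b = σ := congrArg Prod.snd hfst
        have : Equiv.swap a b = 1 := by
          have := congrArg (fun τ => σ⁻¹ * τ) hσ
          simpa [← mul_assoc] using this
        rw [Equiv.swap_eq_one_iff] at this
        have := congrArg Fin.val this
        omega


-- ## counting

lemma BU_empty (hB : ∀ p, InCube L p → ∀ i' : Fin n, p i' = (L:ℤ) → lab p ≠ 0) :
    (Dset lab L i).filter (BU L i) = ∅ := by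
  rw [Finset.eq_empty_iff_forall_notMem]
  rintro ⟨⟨x, σ⟩, k⟩ hmem
  rw [Finset.mem_filter] at hmem
  obtain ⟨ht, hbu⟩ := hmem
  obtain ⟨hsim, hk, hdr⟩ := (mem_Dset lab L i).mp ht
  simp only at hsim hdr
  obtain ⟨hk0, hxL⟩ := hbu
  simp only at hk0 hxL
  subst hk0
  unfold Dr at hdr
  have h0mem : (0 : Fin (n+1)) ∈ Iic (Fin.castSucc i) := Finset.mem_Iic.mpr (Fin.zero_le _)
  rw [← hdr] at h0mem
  obtain ⟨k', hk', hlab⟩ := Finset.mem_image.mp h0mem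
  have hk'0 : (k' : ℕ) ≠ 0 := by
    have := (Finset.mem_erase.mp hk').1
    exact fun hc => this (Fin.ext hc)
  have hcoord : V x σ k' (σ ⟨0, i.pos⟩) = (L:ℤ) := by
    unfold V
    rw [Equiv.symm_apply_apply, hxL, if_pos (by show 0 < (k':ℕ); omega)]
    ring
  exact hB _ (V_mem_cube hsim k') _ hcoord hlab

lemma BD_count (hL : 1 ≤ L)
    (hA : ∀ p, InCube L p → ∀ i' : Fin n, p i' = 0 → lab p ≠ i'.succ) :
    ((Dset lab L i).filter (BD i)).card
      = ((Simp L (Fin.castSucc i)).filter (Full lab (Fin.castSucc i))).card := by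
  apply Finset.card_bij (fun t _ => t.1)
  · rintro ⟨⟨x, σ⟩, k⟩ hmem
    rw [Finset.mem_filter] at hmem
    obtain ⟨ht, hbd⟩ := hmem
    obtain ⟨hsim, hk, hdr⟩ := (mem_Dset lab L i).mp ht
    simp only at hsim hdr
    obtain ⟨hk1, hx0⟩ := hbd
    simp only at hk1 hx0
    subst hk1
    unfold Dr at hdr
    rw [Iic_succ_erase] at hdr
    obtain ⟨hbox, hfrz, hfrσ⟩ := mem_Simp.mp hsim
    have hsv : ((σ i : Fin n) : ℕ) ≤ (i : ℕ) := sigma_low hsim le_rfl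
    have hsvi : σ i = i := by
      by_contra hne
      have hlt : ((σ i : Fin n) : ℕ) < (i : ℕ) := by
        rcases Nat.lt_or_ge ((σ i : Fin n) : ℕ) (i : ℕ) with h | h
        · exact h
        · exact absurd (Fin.ext (le_antisymm hsv h).symm).symm hne
      set j0 : Fin n := σ i with hj0
      have hmemim : (Fin.succ j0 : Fin (n+1)) ∈ Iic (Fin.castSucc i) := by
        rw [Finset.mem_Iic, Fin.le_def, Fin.val_succ, Fin.coe_castSucc]
        omega
      rw [← hdr] at hmemim
      obtain ⟨k', hk', hlab⟩ := Finset.mem_image.mp hmemim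
      have hk'le : (k' : ℕ) ≤ (i : ℕ) := by
        have := Finset.mem_Iic.mp hk'
        rw [Fin.le_def, Fin.coe_castSucc] at this
        exact this
      have hcoord : V x σ k' j0 = 0 := by
        unfold V
        have : σ.symm j0 = i := by rw [hj0, Equiv.symm_apply_apply]
        rw [this, if_neg (by omega)]
        rw [hj0] at hx0 ⊢
        omega
      exact hA _ (V_mem_cube hsim k') j0 hcoord hlab
    refine Finset.mem_filter.mpr ⟨?_, ?_⟩
    · refine mem_Simp.mpr ⟨hbox, ?_, ?_⟩
      · intro j hj
        rw [Fin.coe_castSucc] at hj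
        rcases Nat.eq_or_lt_of_le hj with h | h
        · have : j = i := Fin.ext h.symm
          subst this
          rw [← hsvi]; exact hx0
        · exact hfrz j (by rw [Fin.val_succ]; omega)
      · intro j hj
        rw [Fin.coe_castSucc] at hj
        rcases Nat.eq_or_lt_of_le hj with h | h
        · have : j = i := Fin.ext h.symm
          subst this; exact hsvi
        · exact hfrσ j (by rw [Fin.val_succ]; omega)
    · exact hdr
  · rintro ⟨⟨x, σ⟩, k⟩ hmem ⟨⟨x', σ'⟩, k'⟩ hmem' heq
    rw [Finset.mem_filter] at hmem hmem'
    have h1 : k = i.succ := hmem.2.1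
    have h2 : k' = i.succ := hmem'.2.1
    simp only at heq
    subst h1; subst h2
    rw [heq]
  · intro a ha
    rw [Finset.mem_filter] at ha
    obtain ⟨hsim, hfull⟩ := ha
    obtain ⟨hbox, hfrz, hfrσ⟩ := mem_Simp.mp (by exact hsim)
    refine ⟨⟨a, i.succ⟩, ?_, rfl⟩
    have hsucc : a ∈ Simp L i.succ := by
      refine mem_Simp.mpr ⟨hbox, ?_, ?_⟩
      · intro j hj
        exact hfrz j (by rw [Fin.val_succ] at hj; rw [Fin.coe_castSucc]; omega)
      · intro j hj
        exact hfrσ j (by rw [Fin.val_succ] at hj; rw [Fin.coe_castSucc]; omega)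
    have hdoor : Dr lab i i.succ a := by
      unfold Dr
      rw [Iic_succ_erase]
      exact hfull
    refine Finset.mem_filter.mpr ⟨(mem_Dset lab L i).mpr
      ⟨hsucc, Finset.mem_Iic.mpr le_rfl, hdoor⟩, ?_, ?_⟩
    · rfl
    · simp only
      have hsi : a.2 i = i := hfrσ i (by rw [Fin.coe_castSucc])
      rw [hsi]
      exact hfrz i (by rw [Fin.coe_castSucc])

lemma interior_zero :
    ((((Dset lab L i).filter (fun t => ¬ BU L i t ∧ ¬ BD i t)).card : ZMod 2)) = 0 := by
  classical
  have hsum : ∑ _t ∈ (Dset lab L i).filter (fun t => ¬ BU L i t ∧ ¬ BD i t), (1 : ZMod 2) = 0 := by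
    apply Finset.sum_involution (fun t _ => psi i t)
    · intro t ht; decide
    · intro t ht _
      rw [Finset.mem_filter] at ht
      exact (psi_good lab L i ht.1 ht.2.1 ht.2.2).2.2
    · intro t ht
      rw [Finset.mem_filter] at ht ⊢
      obtain ⟨h1, h2, h3⟩ := (psi_good lab L i ht.1 ht.2.1 ht.2.2).1
      exact ⟨h1, h2, h3⟩
    · intro t ht
      rw [Finset.mem_filter] at ht
      exact (psi_good lab L i ht.1 ht.2.1 ht.2.2).2.1
  rw [Finset.sum_const] at hsum
  simpa using hsum


lemma doors_count (hA : ∀ p, InCube L p → ∀ i' : Fin n, p i' = 0 → lab p ≠ i'.succ) :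
    ((Dset lab L i).card : ZMod 2)
      = (((Simp L i.succ).filter (Full lab i.succ)).card : ZMod 2) := by
  classical
  unfold Dset
  rw [Finset.card_sigma, Nat.cast_sum]
  have hterm : ∀ a ∈ Simp L i.succ,
      ((((Iic i.succ).filter (fun k => Dr lab i k a)).card : ZMod 2))
        = if Full lab i.succ a then 1 else 0 := by
    intro a ha
    have hpl := parity_lemma (Iic i.succ) (Iic i.succ) (gmap lab a.1 a.2) i.succ
      (Finset.mem_Iic.mpr le_rfl) rfl (fun k hk => lab_mem_Iic lab hA ha hk)
    rw [Iic_succ_erase] at hpl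
    convert hpl using 3 <;> rfl
  rw [Finset.sum_congr rfl hterm, Finset.sum_boole]

lemma step (hL : 1 ≤ L)
    (hA : ∀ p, InCube L p → ∀ i' : Fin n, p i' = 0 → lab p ≠ i'.succ)
    (hB : ∀ p, InCube L p → ∀ i' : Fin n, p i' = (L:ℤ) → lab p ≠ 0) :
    (((Simp L i.succ).filter (Full lab i.succ)).card : ZMod 2)
      = (((Simp L (Fin.castSucc i)).filter (Full lab (Fin.castSucc i))).card : ZMod 2) := by
  classical
  have e1 := Finset.card_filter_add_card_filter_not
    (s := Dset lab L i) (p := BU L i)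
  have e2 := Finset.card_filter_add_card_filter_not
    (s := (Dset lab L i).filter (fun t => ¬ BU L i t)) (p := BD i)
  have e3 : ((Dset lab L i).filter (fun t => ¬ BU L i t)).filter (BD i)
      = (Dset lab L i).filter (BD i) := by
    ext t
    simp only [Finset.mem_filter, and_assoc]
    constructor
    · rintro ⟨h1, h2, h3⟩; exact ⟨h1, h3⟩
    · rintro ⟨h1, h3⟩
      refine ⟨h1, ?_, h3⟩
      intro hbu
      exact Fin.succ_ne_zero i (by rw [← h3.1, hbu.1])
  have e4 : ((Dset lab L i).filter (fun t => ¬ BU L i t)).filter (fun t => ¬ BD i t)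
      = (Dset lab L i).filter (fun t => ¬ BU L i t ∧ ¬ BD i t) := by
    rw [Finset.filter_filter]
  have hcast : ((Dset lab L i).card : ZMod 2)
      = (((Dset lab L i).filter (BU L i)).card : ZMod 2)
        + (((Dset lab L i).filter (BD i)).card : ZMod 2)
        + (((Dset lab L i).filter (fun t => ¬ BU L i t ∧ ¬ BD i t)).card : ZMod 2) := by
    rw [← e1, ← e2, e3, e4]
    push_cast
    ring
  rw [← doors_count lab L i hA, hcast, BU_empty lab L i hB, interior_zero lab L i,
    BD_count lab L i hL hA]
  simp

lemma base (hL : 1 ≤ L)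
    (hA : ∀ p, InCube L p → ∀ i' : Fin n, p i' = 0 → lab p ≠ i'.succ) :
    (((Simp L (0 : Fin (n+1))).filter (Full lab (0 : Fin (n+1)))).card : ZMod 2) = 1 := by
  classical
  have hsimp0 : Simp L (0 : Fin (n+1)) = {((fun _ => (0:ℤ)), 1)} := by
    ext ⟨x, σ⟩
    rw [mem_Simp, Finset.mem_singleton, Prod.mk.injEq]
    constructor
    · rintro ⟨h1, h2, h3⟩
      constructor
      · funext j; exact h2 j (Nat.zero_le _)
      · exact Equiv.ext (fun j => h3 j (Nat.zero_le _))
    · rintro ⟨rfl, rfl⟩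
      refine ⟨fun j => ⟨le_refl _, ?_⟩, fun j _ => rfl, fun j _ => rfl⟩
      show (0:ℤ) ≤ (L:ℤ) - 1
      have h1 : (1:ℕ) ≤ L := hL
      omega
  have hV0 : V (fun _ : Fin n => (0:ℤ)) 1 0 = (fun _ => (0:ℤ)) := by
    funext j
    unfold V
    rw [if_neg (by simp)]
    simp
  have hlab0 : lab (fun _ : Fin n => (0:ℤ)) = 0 := by
    by_contra hc
    have hpos : 0 < ((lab (fun _ : Fin n => (0:ℤ)) : Fin (n+1)) : ℕ) := by
      rcases Nat.eq_zero_or_pos ((lab (fun _ : Fin n => (0:ℤ)) : Fin (n+1)) : ℕ) with h | h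
      · exact absurd (Fin.ext h) hc
      · exact h
    have hlt : ((lab (fun _ : Fin n => (0:ℤ)) : Fin (n+1)) : ℕ) - 1 < n := by
      have := (lab (fun _ : Fin n => (0:ℤ))).isLt; omega
    have hcube : InCube L (fun _ : Fin n => (0:ℤ)) := fun j => ⟨le_refl _, by positivity⟩
    exact hA _ hcube ⟨_, hlt⟩ rfl (Fin.ext (by rw [Fin.val_succ]; simp; omega))
  have hfull : Full lab (0 : Fin (n+1)) ((fun _ => (0:ℤ)), 1) := by
    unfold Full
    have hIic : Iic (0 : Fin (n+1)) = {0} := by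
      ext k; rw [Finset.mem_Iic, Finset.mem_singleton, Fin.le_zero_iff]
    rw [hIic, Finset.image_singleton]
    show ({gmap lab (fun _ : Fin n => (0:ℤ)) 1 0} : Finset (Fin (n+1))) = {0}
    unfold gmap
    rw [hV0, hlab0]
  rw [hsimp0, Finset.filter_singleton, if_pos hfull, Finset.card_singleton, Nat.cast_one]

theorem full_count (hL : 1 ≤ L)
    (hA : ∀ p, InCube L p → ∀ i' : Fin n, p i' = 0 → lab p ≠ i'.succ)
    (hB : ∀ p, InCube L p → ∀ i' : Fin n, p i' = (L:ℤ) → lab p ≠ 0) (D : Fin (n+1)) :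
    (((Simp L D).filter (Full lab D)).card : ZMod 2) = 1 := by
  induction D using Fin.induction with
  | zero => exact base lab L hL hA
  | succ i ih => rw [step lab L i hL hA hB]; exact ih

theorem exists_full (hL : 1 ≤ L)
    (hA : ∀ p, InCube L p → ∀ i' : Fin n, p i' = 0 → lab p ≠ i'.succ)
    (hB : ∀ p, InCube L p → ∀ i' : Fin n, p i' = (L:ℤ) → lab p ≠ 0) :
    ∃ x σ, (x, σ) ∈ Simp L (Fin.last n) ∧
      Function.Injective (fun k : Fin (n+1) => lab (V x σ k)) := by
  classical
  have h := full_count lab L hL hA hB (Fin.last n)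
  have hne : ((Simp L (Fin.last n)).filter (Full lab (Fin.last n))).Nonempty := by
    by_contra hc
    rw [Finset.not_nonempty_iff_eq_empty] at hc
    rw [hc] at h
    simp at h
  obtain ⟨⟨x, σ⟩, hmem⟩ := hne
  rw [Finset.mem_filter] at hmem
  refine ⟨x, σ, hmem.1, ?_⟩
  have hfull := hmem.2
  unfold Full at hfull
  rw [Iic_last_eq_univ] at hfull
  have hinj : Set.InjOn (gmap lab x σ) (univ : Finset (Fin (n+1))) :=
    Finset.injOn_of_card_image_eq (by rw [hfull])
  intro u v huv
  exact hinj (by simp) (by simp) huv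


-- ## Steinhaus: some color class crosses the cube

variable (f : (Fin n → ℤ) → Fin n)

def Adj (p q : Fin n → ℤ) : Prop := ∀ j, |p j - q j| ≤ 1

lemma adj_symm {p q : Fin n → ℤ} (h : Adj p q) : Adj q p := by
  intro j; rw [abs_sub_comm]; exact h j

def CStep (a : Fin n) (p q : Fin n → ℤ) : Prop :=
  Adj p q ∧ f p = a ∧ f q = a ∧ InCube L p ∧ InCube L q

def ReachLow (p : Fin n → ℤ) (i : Fin n) : Prop :=
  ∃ q, Relation.ReflTransGen (CStep L f (f p)) p q ∧ q i = 0

def ReachHigh (p : Fin n → ℤ) (i : Fin n) : Prop :=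
  ∃ q, Relation.ReflTransGen (CStep L f (f p)) p q ∧ q i = (L:ℤ)

lemma reachLow_congr {p q : Fin n → ℤ} (hadj : Adj p q) (hf : f p = f q)
    (hp : InCube L p) (hq : InCube L q) (i : Fin n) :
    ReachLow L f p i ↔ ReachLow L f q i := by
  have key : ∀ u v : Fin n → ℤ, Adj u v → f u = f v → InCube L u → InCube L v →
      ReachLow L f u i → ReachLow L f v i := by
    rintro u v huv hfuv hu hv ⟨r, hur, hr⟩
    refine ⟨r, ?_, hr⟩
    have hstep : CStep L f (f v) v u :=
      ⟨adj_symm huv, rfl, hfuv, hv, hu⟩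
    have : Relation.ReflTransGen (CStep L f (f v)) u r := by
      rw [← hfuv]; exact hur
    exact Relation.ReflTransGen.head hstep this
  exact ⟨key p q hadj hf hp hq, key q p (adj_symm hadj) hf.symm hq hp⟩

theorem steinhaus (hL : 1 ≤ L) :
    ∃ p i, InCube L p ∧ ReachLow L f p i ∧ ReachHigh L f p i := by
  classical
  by_contra hc
  push_neg at hc
  set lab : (Fin n → ℤ) → Fin (n+1) := fun p =>
    if InCube L p then
      (if hs : (univ.filter (fun i : Fin n => ¬ ReachLow L f p i)).Nonempty
        then ((univ.filter (fun i : Fin n => ¬ ReachLow L f p i)).min' hs).succ else 0)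
    else 0 with hlab
  have hA : ∀ p, InCube L p → ∀ i' : Fin n, p i' = 0 → lab p ≠ i'.succ := by
    intro p hp i' hp0 hc'
    rw [hlab] at hc'
    simp only [if_pos hp] at hc'
    by_cases hs : (univ.filter (fun i : Fin n => ¬ ReachLow L f p i)).Nonempty
    · rw [dif_pos hs] at hc'
      have hmin := Fin.succ_injective n hc'
      have : i' ∈ univ.filter (fun i : Fin n => ¬ ReachLow L f p i) := by
        rw [← hmin]; exact Finset.min'_mem _ hs
      rw [Finset.mem_filter] at this
      exact this.2 ⟨p, Relation.ReflTransGen.refl, hp0⟩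
    · rw [dif_neg hs] at hc'
      exact Fin.succ_ne_zero i' hc'.symm
  have hB : ∀ p, InCube L p → ∀ i' : Fin n, p i' = (L:ℤ) → lab p ≠ 0 := by
    intro p hp i' hpL hc'
    rw [hlab] at hc'
    simp only [if_pos hp] at hc'
    by_cases hs : (univ.filter (fun i : Fin n => ¬ ReachLow L f p i)).Nonempty
    · rw [dif_pos hs] at hc'
      exact Fin.succ_ne_zero _ hc'
    · rw [Finset.not_nonempty_iff_eq_empty] at hs
      have hall : ReachLow L f p i' := by
        by_contra hr
        have : i' ∈ univ.filter (fun i : Fin n => ¬ ReachLow L f p i) := by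
          rw [Finset.mem_filter]; exact ⟨Finset.mem_univ _, hr⟩
        rw [hs] at this
        exact absurd this (Finset.notMem_empty _)
      exact hc p i' hp hall ⟨p, Relation.ReflTransGen.refl, hpL⟩
  obtain ⟨x, σ, hmem, hinj⟩ := exists_full lab L hL hA hB
  have hnotinj : ¬ Function.Injective (fun k : Fin (n+1) => f (V x σ k)) := by
    intro hinj2
    have := Fintype.card_le_of_injective _ hinj2
    simp only [Fintype.card_fin] at this
    omega
  rw [Function.not_injective_iff] at hnotinj
  obtain ⟨k, k', hfeq, hkk'⟩ := hnotinj
  have hadj : Adj (V x σ k) (V x σ k') := by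
    intro j
    unfold V
    split_ifs <;> simp <;> omega
  have hcb : InCube L (V x σ k) := V_mem_cube hmem k
  have hcb' : InCube L (V x σ k') := V_mem_cube hmem k'
  have hsets : (univ.filter (fun i : Fin n => ¬ ReachLow L f (V x σ k) i))
      = (univ.filter (fun i : Fin n => ¬ ReachLow L f (V x σ k') i)) := by
    apply Finset.filter_congr
    intro i _
    exact not_congr (reachLow_congr L f hadj hfeq hcb hcb' i)
  have hlabeq : lab (V x σ k) = lab (V x σ k') := by
    have hgen : ∀ (S1 S2 : Finset (Fin n)), S1 = S2 →
        (if hs : S1.Nonempty then (S1.min' hs).succ else (0 : Fin (n+1)))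
          = (if hs : S2.Nonempty then (S2.min' hs).succ else 0) := by
      rintro S1 S2 rfl; rfl
    simp only [hlab]
    rw [if_pos hcb, if_pos hcb']
    exact hgen _ _ hsets
  exact hkk' (hinj hlabeq)

-- ## chains and components

def StepA (a : Fin n) (p q : Fin n → ℤ) : Prop := Adj p q ∧ f p = a ∧ f q = a

lemma stepA_symm {a : Fin n} {p q : Fin n → ℤ} (h : StepA f a p q) : StepA f a q p :=
  ⟨adj_symm h.1, h.2.2, h.2.1⟩

lemma rtgA_symm {a : Fin n} {p q : Fin n → ℤ}
    (h : Relation.ReflTransGen (StepA f a) p q) :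
    Relation.ReflTransGen (StepA f a) q p :=
  (@Relation.ReflTransGen.stdSymm _ _ ⟨fun _ _ hs => stepA_symm f hs⟩).symm _ _ h

lemma rtg_color {a : Fin n} {p q : Fin n → ℤ}
    (h : Relation.ReflTransGen (StepA f a) p q) (hp : f p = a) : f q = a := by
  induction h with
  | refl => exact hp
  | tail _ hstep _ => exact hstep.2.2

def Comp (a : Fin n) (p : Fin n → ℤ) : Set (Fin n → ℤ) :=
  {q | f q = a ∧ Relation.ReflTransGen (StepA f a) p q}

lemma chain_of_rtg {a : Fin n} {u : Fin n → ℤ} (hu : f u = a) :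
    ∀ {q : Fin n → ℤ}, Relation.ReflTransGen (StepA f a) u q →
    ∃ (N : ℕ) (c : Fin (N+1) → (Fin n → ℤ)),
      (∀ t, f (c t) = a ∧ Relation.ReflTransGen (StepA f a) u (c t)) ∧
      c 0 = u ∧ c (Fin.last N) = q ∧
      ∀ (t : Fin N) (j : Fin n), |c t.castSucc j - c t.succ j| ≤ 1 := by
  intro q h
  induction h with
  | refl =>
    exact ⟨0, fun _ => u, fun _ => ⟨hu, Relation.ReflTransGen.refl⟩, rfl, rfl,
      fun t => t.elim0⟩
  | @tail b c0 hab hbc ih =>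
    obtain ⟨N, c, hmemall, h0, hlast, hadjall⟩ := ih
    refine ⟨N+1, Fin.snoc c c0, ?_, ?_, ?_, ?_⟩
    · intro t
      refine Fin.lastCases ?_ ?_ t
      · rw [Fin.snoc_last]
        exact ⟨hbc.2.2, hab.tail hbc⟩
      · intro s
        rw [Fin.snoc_castSucc]
        exact hmemall s
    · rw [← Fin.castSucc_zero, Fin.snoc_castSucc]
      exact h0
    · rw [Fin.snoc_last]
    · intro t j
      refine Fin.lastCases ?_ ?_ t
      · rw [Fin.succ_last, Fin.snoc_last, Fin.snoc_castSucc, hlast]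
        exact hbc.1 j
      · intro s
        rw [Fin.succ_castSucc, Fin.snoc_castSucc, Fin.snoc_castSucc]
        exact hadjall s j

lemma rtg_of_chain {a : Fin n} (N : ℕ) (c : Fin (N+1) → (Fin n → ℤ))
    (hcol : ∀ t, f (c t) = a)
    (hadj : ∀ (t : Fin N) (j : Fin n), |c t.castSucc j - c t.succ j| ≤ 1) :
    Relation.ReflTransGen (StepA f a) (c 0) (c (Fin.last N)) := by
  have key : ∀ m : ℕ, ∀ hm : m ≤ N, Relation.ReflTransGen (StepA f a) (c 0) (c ⟨m, by omega⟩) := by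
    intro m
    induction m with
    | zero =>
      intro _
      have : (⟨0, by omega⟩ : Fin (N+1)) = 0 := rfl
      rw [this]
    | succ m ih =>
      intro hm
      have hstep : StepA f a (c ⟨m, by omega⟩) (c ⟨m+1, by omega⟩) := by
        have hadj' := hadj ⟨m, by omega⟩ 
        refine ⟨?_, hcol _, hcol _⟩
        intro j
        exact hadj' j
      exact (ih (by omega)).tail hstep
  have := key N le_rfl
  have hlast : (⟨N, by omega⟩ : Fin (N+1)) = Fin.last N := rfl
  rw [hlast] at this
  exact this

lemma int_ivt (N : ℕ) (c : Fin (N+1) → ℤ)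
    (hadj : ∀ t : Fin N, |c t.castSucc - c t.succ| ≤ 1) (v : ℤ)
    (h0 : c 0 ≤ v) (h1 : v ≤ c (Fin.last N)) : ∃ t, c t = v := by
  induction N with
  | zero => exact ⟨0, le_antisymm h0 h1⟩
  | succ N ih =>
    by_cases hv : v ≤ c (Fin.last N).castSucc
    · obtain ⟨t, ht⟩ := ih (fun t => c t.castSucc)
        (fun t => by
          have h := hadj t.castSucc
          rw [Fin.succ_castSucc] at h
          exact h) h0 hv
      exact ⟨t.castSucc, ht⟩
    · push_neg at hv
      have hstep := hadj (Fin.last N)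
      rw [Fin.succ_last, abs_le] at hstep
      refine ⟨Fin.last (N+1), ?_⟩
      have h1' : v ≤ c (Fin.last N.succ) := h1
      have hgoal : c (Fin.last N.succ) = v := by omega
      exact hgoal


lemma comp_one_connected (a : Fin n) (p : Fin n → ℤ) (hp : f p = a) :
    OneConnected (Comp f a p) := by
  intro u hu v hv
  obtain ⟨huf, hpu⟩ := hu
  obtain ⟨hvf, hpv⟩ := hv
  have huv : Relation.ReflTransGen (StepA f a) u v := (rtgA_symm f hpu).trans hpv
  obtain ⟨N, c, hmem, h0, hlast, hadj⟩ := chain_of_rtg f huf huv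
  refine ⟨N, c, ?_, h0, hlast, hadj⟩
  intro t
  exact ⟨(hmem t).1, hpu.trans (hmem t).2⟩

lemma comp_is_component (a : Fin n) (p : Fin n → ℤ) (hp : f p = a) :
    IsOneComponent (f ⁻¹' {a}) (Comp f a p) := by
  refine ⟨?_, comp_one_connected f a p hp, ?_⟩
  · intro q hq
    exact hq.1
  · intro C' hCC' hC'sub hC'conn
    apply Set.Subset.antisymm
    · intro q hq
      have hpC' : p ∈ C' := hCC' ⟨hp, Relation.ReflTransGen.refl⟩
      obtain ⟨N, c, hmemC, h0, hlast, hadj⟩ := hC'conn p hpC' q hq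
      have hcol : ∀ t, f (c t) = a := fun t => hC'sub (hmemC t)
      have hrtg := rtg_of_chain f N c hcol hadj
      rw [h0, hlast] at hrtg
      exact ⟨hC'sub hq, hrtg⟩
    · exact hCC'

end NB

/-- Lower bound for the clustered chromatic number of `Gₙ^∞`: there is no `n`-coloring of
`ℤⁿ` all of whose monochromatic 1-connected components have uniformly bounded size. -/
theorem no_bounded_n_coloring_of_grid (n m : ℕ) (hn : 1 ≤ n) (hm : 1 ≤ m) :
    ¬ ∃ (f : (Fin n → ℤ) → Fin n) (K : ℕ),
      ∀ i : Fin n, ∀ C, IsOneComponent (f ⁻¹' {i}) C → C.Finite ∧ C.ncard ≤ K := by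
  classical
  rintro ⟨f, K, hcomp⟩
  set L := K + 1 with hLdef
  obtain ⟨p, i0, hp, hlow, hhigh⟩ := NB.steinhaus L f (by omega)
  set a := f p with ha
  obtain ⟨hfin, hcard⟩ := hcomp a (NB.Comp f a p) (NB.comp_is_component f a p rfl)
  obtain ⟨ql, hrl, hql⟩ := hlow
  obtain ⟨qh, hrh, hqh⟩ := hhigh
  have hmono : ∀ {u v : Fin n → ℤ}, Relation.ReflTransGen (NB.CStep L f a) u v →
      Relation.ReflTransGen (NB.StepA f a) u v :=
    fun h => Relation.ReflTransGen.mono (r := NB.CStep L f a) (p := NB.StepA f a) (fun u v hs => ⟨hs.1, hs.2.1, hs.2.2.1⟩) _ _ h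
  have hqlC : ql ∈ NB.Comp f a p := ⟨NB.rtg_color f (hmono hrl) rfl, hmono hrl⟩
  have hqhC : qh ∈ NB.Comp f a p := ⟨NB.rtg_color f (hmono hrh) rfl, hmono hrh⟩
  obtain ⟨N, c, hmemC, h0, hlast, hadj⟩ :=
    NB.comp_one_connected f a p rfl ql hqlC qh hqhC
  have hivt : ∀ v : ℤ, 0 ≤ v → v ≤ (L:ℤ) → ∃ q, q ∈ NB.Comp f a p ∧ q i0 = v := by
    intro v hv1 hv2
    obtain ⟨t, ht⟩ := NB.int_ivt N (fun t => c t i0) (fun t => hadj t i0) v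
      (by show c 0 i0 ≤ v; rw [h0, hql]; exact hv1)
      (by show v ≤ c (Fin.last N) i0; rw [hlast, hqh]; exact hv2)
    exact ⟨c t, hmemC t, ht⟩
  have hivt' : ∀ v : ℤ, ∃ q, (0 ≤ v ∧ v ≤ (L:ℤ)) → q ∈ NB.Comp f a p ∧ q i0 = v := by
    intro v
    by_cases h : 0 ≤ v ∧ v ≤ (L:ℤ)
    · obtain ⟨q, hq1, hq2⟩ := hivt v h.1 h.2
      exact ⟨q, fun _ => ⟨hq1, hq2⟩⟩
    · exact ⟨p, fun hh => absurd hh h⟩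
  choose g hg using hivt'
  have hsize : (Finset.Icc (0:ℤ) (L:ℤ)).card ≤ hfin.toFinset.card := by
    apply Finset.card_le_card_of_injOn g
    · intro v hv
      rw [Finset.mem_coe, Finset.mem_Icc] at hv
      rw [Finset.mem_coe, Set.Finite.mem_toFinset]
      exact (hg v hv).1
    · intro v hv v' hv' heq
      rw [Finset.mem_coe, Finset.mem_Icc] at hv hv'
      have h1 := (hg v hv).2
      have h2 := (hg v' hv').2
      rw [← h1, ← h2, heq]
  have hicc : (Finset.Icc (0:ℤ) (L:ℤ)).card = L + 1 := by
    rw [Int.card_Icc]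
    omega
  have hnc : (NB.Comp f a p).ncard = hfin.toFinset.card := by
    exact Set.ncard_eq_toFinset_card _ hfin
  omega
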